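/- arXiv:1009.5015 — 2 statements merged into one kernel-verified Lean document; each statement's English description precedes it below -/
import Mathlib

section
/- For real L ≥ 2 and integer parameters, the sum over R ≥ 1 of Σ_{q=1}^{⌊R/(αN₀)⌋} C(n,q)·C(R+q,q)·L^{−R/3} is at most Σ_{R≥1} L^{−R/4}, provided R ≥ λn/12 for each contributing term and L is sufficiently large (depending on α, N₀, λ); in particular the total is at most 2·L^{−λn/48} for sufficiently large L. -/
lemma my_choose_le_two_pow (n q : ℕ) : n.choose q ≤ 2 ^ n := by
  rcases le_or_gt q n with h | h
  · calc n.choose q ≤ ∑ m ∈ Finset.range (n+1), n.choose m :=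
        Finset.single_le_sum (fun i _ => Nat.zero_le _) (Finset.mem_range.mpr (Nat.lt_succ_of_le h))
    _ = 2 ^ n := Nat.sum_range_choose n
  · simp [Nat.choose_eq_zero_of_lt h]

lemma my_term_bound (n R q : ℕ) : n.choose q * (R + q).choose q ≤ 2 ^ (2*n + R) := by
  rcases le_or_gt q n with h | h
  · calc n.choose q * (R + q).choose q ≤ 2 ^ n * 2 ^ (R + q) :=
        Nat.mul_le_mul (my_choose_le_two_pow n q) (my_choose_le_two_pow (R+q) q)
    _ ≤ 2 ^ n * 2 ^ (R + n) := Nat.mul_le_mul_left _ (Nat.pow_le_pow_right (by norm_num) (by omega))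
    _ = 2 ^ (2*n + R) := by rw [← pow_add]; ring_nf
  · simp [Nat.choose_eq_zero_of_lt h]

open Classical in
/-- Counting estimate for exponential tails: with `λ = 10⁻³`, `α = 10⁻⁶`, the sum over
`R ≥ 1` (restricted to `R ≥ λn/12`) of `Σ_{q=1}^{⌊R/(αN₀)⌋} C(n,q)·C(R+q,q)·L^{−R/3}` is
at most `Σ_{R≥1} L^{−R/4}`, and in particular at most `2·L^{−λn/48}`, for `L ≥ 2`
sufficiently large depending on `α, N₀, λ`. -/
theorem stmt5 (N₀ : ℕ) (hN₀ : 0 < N₀) :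
    ∃ L₀ : ℝ, 2 ≤ L₀ ∧ ∀ L : ℝ, L₀ ≤ L → ∀ n : ℕ,
      (∑' R : ℕ, if 1 ≤ R ∧ (1 / 1000 : ℝ) * n / 12 ≤ (R : ℝ) then
          (∑ q ∈ Finset.Icc 1 (Nat.floor ((R : ℝ) / ((1 / 1000000 : ℝ) * N₀))),
            (n.choose q : ℝ) * ((R + q).choose q : ℝ)) * L ^ (-(R : ℝ) / 3)
        else 0)
        ≤ (∑' R : ℕ, if 1 ≤ R then L ^ (-(R : ℝ) / 4) else 0) ∧
      (∑' R : ℕ, if 1 ≤ R ∧ (1 / 1000 : ℝ) * n / 12 ≤ (R : ℝ) then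
          (∑ q ∈ Finset.Icc 1 (Nat.floor ((R : ℝ) / ((1 / 1000000 : ℝ) * N₀))),
            (n.choose q : ℝ) * ((R + q).choose q : ℝ)) * L ^ (-(R : ℝ) / 3)
        else 0)
        ≤ 2 * L ^ (-((1 / 1000 : ℝ) * n) / 48) := by
  have hbase : (2:ℝ) ≤ (2:ℝ) ^ (288264:ℕ) := by
    calc (2:ℝ) = 2 ^ (1:ℕ) := (pow_one 2).symm
    _ ≤ 2 ^ (288264:ℕ) := pow_le_pow_right₀ one_le_two (by norm_num)
  refine ⟨(2:ℝ) ^ (288264:ℕ), hbase, fun L hL n => ?_⟩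
  have hL2 : (2:ℝ) ≤ L := le_trans hbase hL
  have hL0 : (0:ℝ) < L := by linarith only [hL2]
  have hL1 : (1:ℝ) < L := by linarith only [hL2]
  set r : ℝ := L ^ (-(1:ℝ)/4) with hr
  have hr0 : 0 ≤ r := Real.rpow_nonneg hL0.le _
  have hrlt : r < 1 := Real.rpow_lt_one_of_one_lt_of_neg hL1 (by norm_num)
  have hpow : ∀ R : ℕ, L ^ (-(R:ℝ)/4) = r ^ R := by
    intro R
    rw [hr, ← Real.rpow_natCast (L ^ (-(1:ℝ)/4)) R, ← Real.rpow_mul hL0.le]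
    ring_nf
  have hL16 : (16:ℝ) ≤ L := by
    refine le_trans ?_ hL
    calc (16:ℝ) = 2 ^ (4:ℕ) := by norm_num
    _ ≤ 2 ^ (288264:ℕ) := pow_le_pow_right₀ one_le_two (by norm_num)
  have hr_half : r ≤ 1/2 := by
    have h4 : r ^ (4:ℕ) = L⁻¹ := by
      rw [hr, ← Real.rpow_natCast (L ^ (-(1:ℝ)/4)) 4, ← Real.rpow_mul hL0.le]
      norm_num [Real.rpow_neg_one]
    have hle : r ^ (4:ℕ) ≤ (1/2:ℝ) ^ (4:ℕ) := by
      rw [h4]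
      rw [show ((1/2:ℝ))^(4:ℕ) = (16:ℝ)⁻¹ by norm_num]
      exact inv_anti₀ (by norm_num) hL16
    exact (pow_le_pow_iff_left₀ hr0 (by norm_num) (by norm_num)).mp hle
  -- the summand
  set S : ℕ → ℝ := fun R =>
    (∑ q ∈ Finset.Icc 1 (Nat.floor ((R : ℝ) / ((1 / 1000000 : ℝ) * N₀))),
      (n.choose q : ℝ) * ((R + q).choose q : ℝ)) with hS
  set f : ℕ → ℝ := fun R =>
    if 1 ≤ R ∧ (1 / 1000 : ℝ) * n / 12 ≤ (R : ℝ) then S R * L ^ (-(R : ℝ) / 3) else 0 with hf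
  set g : ℕ → ℝ := fun R => if 1 ≤ R then L ^ (-(R : ℝ) / 4) else 0 with hg
  have hSnonneg : ∀ R, 0 ≤ S R := fun R =>
    Finset.sum_nonneg (fun q _ => by positivity)
  -- key: S R ≤ L ^ (R/12) when conditions hold
  have key : ∀ R : ℕ, 1 ≤ R → (1 / 1000 : ℝ) * n / 12 ≤ (R : ℝ) →
      S R ≤ L ^ ((R:ℝ)/12) := by
    intro R hR1 hRn
    set Q := Nat.floor ((R : ℝ) / ((1 / 1000000 : ℝ) * N₀)) with hQdef
    have hN1 : (1:ℝ) ≤ N₀ := by exact_mod_cast hN₀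
    have hR1' : (1:ℝ) ≤ (R:ℝ) := by exact_mod_cast hR1
    have hQ : (Q:ℝ) ≤ 1000000 * R := by
      have hpos : (0:ℝ) < (1/1000000:ℝ) * N₀ := by positivity
      calc (Q:ℝ) ≤ (R:ℝ) / ((1/1000000:ℝ) * N₀) := Nat.floor_le (by positivity)
      _ ≤ 1000000 * R := by
          rw [div_le_iff₀ hpos]
          nlinarith
    have hsum : S R ≤ (Q:ℝ) * (2:ℝ) ^ ((2*n+R : ℕ):ℝ) := by
      have hterm : ∀ q ∈ Finset.Icc 1 Q,
          (n.choose q : ℝ) * ((R + q).choose q : ℝ) ≤ (2:ℝ) ^ ((2*n+R : ℕ):ℝ) := by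
        intro q _
        rw [Real.rpow_natCast]
        calc (n.choose q : ℝ) * ((R + q).choose q : ℝ)
            = ((n.choose q * (R + q).choose q : ℕ) : ℝ) := by push_cast; ring
        _ ≤ (((2:ℕ) ^ (2*n+R) : ℕ) : ℝ) := by exact_mod_cast my_term_bound n R q
        _ = (2:ℝ) ^ (2*n+R) := by push_cast; ring
      calc S R ≤ ∑ _q ∈ Finset.Icc 1 Q, (2:ℝ) ^ ((2*n+R : ℕ):ℝ) :=
          Finset.sum_le_sum hterm
      _ = ((Finset.Icc 1 Q).card : ℝ) * (2:ℝ) ^ ((2*n+R : ℕ):ℝ) := by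
          rw [Finset.sum_const, nsmul_eq_mul]
      _ ≤ (Q:ℝ) * (2:ℝ) ^ ((2*n+R : ℕ):ℝ) := by
          have : (Finset.Icc 1 Q).card ≤ Q := by rw [Nat.card_Icc]; omega
          have h2 : (0:ℝ) ≤ (2:ℝ) ^ ((2*n+R : ℕ):ℝ) := Real.rpow_nonneg (by norm_num) _
          exact mul_le_mul_of_nonneg_right (by exact_mod_cast this) h2
    have hn : (n:ℝ) ≤ 12000 * R := by linarith
    have e2 : (2:ℝ) ^ ((2*n+R : ℕ):ℝ) ≤ (2:ℝ) ^ ((24001:ℝ)*R) := by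
      apply Real.rpow_le_rpow_of_exponent_le one_le_two
      push_cast; linarith
    have e3 : (Q:ℝ) ≤ (2:ℝ) ^ ((21:ℝ)*R) := by
      have hR2 : (R:ℝ) ≤ (2:ℝ) ^ ((R:ℕ):ℝ) := by
        rw [Real.rpow_natCast]
        exact_mod_cast (Nat.lt_two_pow_self (n := R)).le
      have hA : (1000000:ℝ) ≤ (2:ℝ) ^ ((20:ℝ)*R) := by
        calc (1000000:ℝ) ≤ (2:ℝ) ^ ((20:ℕ):ℝ) := by
              rw [Real.rpow_natCast]; norm_num
        _ ≤ (2:ℝ) ^ ((20:ℝ)*R) := by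
              apply Real.rpow_le_rpow_of_exponent_le one_le_two
              push_cast; nlinarith
      calc (Q:ℝ) ≤ 1000000 * R := hQ
      _ ≤ (2:ℝ) ^ ((20:ℝ)*R) * (2:ℝ) ^ ((R:ℕ):ℝ) :=
          mul_le_mul hA hR2 (Nat.cast_nonneg R) (Real.rpow_nonneg (by norm_num) _)
      _ = (2:ℝ) ^ ((21:ℝ)*R) := by
          rw [← Real.rpow_add (by norm_num)]; push_cast; ring_nf
    have e4 : (2:ℝ) ^ ((24022:ℝ)*R) ≤ L ^ ((R:ℝ)/12) := by
      have h1 : ((2:ℝ) ^ (288264:ℕ)) ^ ((R:ℝ)/12) ≤ L ^ ((R:ℝ)/12) :=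
        Real.rpow_le_rpow (by positivity) hL (by positivity)
      have h2 : ((2:ℝ) ^ (288264:ℕ)) ^ ((R:ℝ)/12) = (2:ℝ) ^ ((24022:ℝ)*R) := by
        rw [← Real.rpow_natCast (2:ℝ) 288264, ← Real.rpow_mul (by norm_num)]
        push_cast; ring_nf
      linarith [h2 ▸ h1]
    calc S R ≤ (Q:ℝ) * (2:ℝ) ^ ((2*n+R : ℕ):ℝ) := hsum
    _ ≤ (2:ℝ) ^ ((21:ℝ)*R) * (2:ℝ) ^ ((24001:ℝ)*R) := by
        apply mul_le_mul e3 e2 (Real.rpow_nonneg (by norm_num) _)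
          (Real.rpow_nonneg (by norm_num) _)
    _ = (2:ℝ) ^ ((24022:ℝ)*R) := by
        rw [← Real.rpow_add (by norm_num)]; ring_nf
    _ ≤ L ^ ((R:ℝ)/12) := e4
  -- per-term bound of f by L^{-R/4}
  have fkey : ∀ R : ℕ, 1 ≤ R → (1 / 1000 : ℝ) * n / 12 ≤ (R : ℝ) →
      S R * L ^ (-(R:ℝ)/3) ≤ L ^ (-(R:ℝ)/4) := by
    intro R hR1 hRn
    have h1 : S R * L ^ (-(R:ℝ)/3) ≤ L ^ ((R:ℝ)/12) * L ^ (-(R:ℝ)/3) :=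
      mul_le_mul_of_nonneg_right (key R hR1 hRn) (Real.rpow_nonneg hL0.le _)
    have h2 : L ^ ((R:ℝ)/12) * L ^ (-(R:ℝ)/3) = L ^ (-(R:ℝ)/4) := by
      rw [← Real.rpow_add hL0]; ring_nf
    linarith [h2 ▸ h1]
  have hfg : ∀ R, f R ≤ g R := by
    intro R
    simp only [hf, hg]
    split_ifs with h1 h2 h2
    · exact fkey R h1.1 h1.2
    · exact absurd h1.1 h2
    · exact Real.rpow_nonneg hL0.le _
    · exact le_refl 0
  have hgeo : Summable (fun R : ℕ => r ^ R) := summable_geometric_of_lt_one hr0 hrlt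
  have hgnonneg : ∀ R, 0 ≤ g R := by
    intro R; simp only [hg]; split_ifs
    · exact Real.rpow_nonneg hL0.le _
    · exact le_refl 0
  have hfnonneg : ∀ R, 0 ≤ f R := by
    intro R; simp only [hf]; split_ifs
    · exact mul_nonneg (hSnonneg R) (Real.rpow_nonneg hL0.le _)
    · exact le_refl 0
  have hgler : ∀ R, g R ≤ r ^ R := by
    intro R; simp only [hg]; split_ifs
    · rw [hpow R]
    · exact pow_nonneg hr0 R
  have hgsum : Summable g := Summable.of_nonneg_of_le hgnonneg hgler hgeo
  have hfsum : Summable f := Summable.of_nonneg_of_le hfnonneg hfg hgsum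
  refine ⟨Summable.tsum_le_tsum hfg hfsum hgsum, ?_⟩
  set m : ℕ := max 1 (Nat.ceil ((n:ℝ)/12000)) with hm
  set h : ℕ → ℝ := fun R => if m ≤ R then r ^ R else 0 with hhdef
  have hfh : ∀ R, f R ≤ h R := by
    intro R
    simp only [hf, hhdef]
    split_ifs with h1 h2
    · rw [← hpow R]; exact fkey R h1.1 h1.2
    · exfalso
      apply h2
      have hceil : Nat.ceil ((n:ℝ)/12000) ≤ R := Nat.ceil_le.mpr (by linarith [h1.2])
      exact max_le h1.1 hceil
    · exact pow_nonneg hr0 R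
    · exact le_refl 0
  have hhler : ∀ R, h R ≤ r ^ R := by
    intro R; simp only [hhdef]; split_ifs
    · exact le_refl _
    · exact pow_nonneg hr0 R
  have hhnonneg : ∀ R, 0 ≤ h R := by
    intro R; simp only [hhdef]; split_ifs
    · exact pow_nonneg hr0 R
    · exact le_refl 0
  have hhsum : Summable h := Summable.of_nonneg_of_le hhnonneg hhler hgeo
  have hfh' : ∑' R, f R ≤ ∑' R, h R := Summable.tsum_le_tsum hfh hfsum hhsum
  have htail : ∑' R, h R = (1 - r)⁻¹ * r ^ m := by
    have h0 : ∑ i ∈ Finset.range m, h i = 0 := by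
      apply Finset.sum_eq_zero
      intro i hi
      have : ¬ m ≤ i := by simpa using Finset.mem_range.mp hi
      simp [hhdef, this]
    have hshift := Summable.sum_add_tsum_nat_add m hhsum
    rw [h0, zero_add] at hshift
    rw [← hshift]
    have heq : ∀ i : ℕ, h (i + m) = r ^ i * r ^ m := by
      intro i
      have : m ≤ i + m := Nat.le_add_left m i
      simp [hhdef, this, pow_add]
    calc ∑' i, h (i + m) = ∑' i, r ^ i * r ^ m := tsum_congr heq
    _ = (∑' i, r ^ i) * r ^ m := tsum_mul_right
    _ = (1 - r)⁻¹ * r ^ m := by rw [tsum_geometric_of_lt_one hr0 hrlt]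
  have hinv : (1 - r)⁻¹ ≤ 2 := by
    rw [show (2:ℝ) = (1/2:ℝ)⁻¹ by norm_num]
    exact inv_anti₀ (by norm_num) (by linarith)
  have hrm : r ^ m ≤ L ^ (-((1/1000:ℝ)*n)/48) := by
    rw [← hpow m]
    apply Real.rpow_le_rpow_of_exponent_le hL1.le
    have hnm : (n:ℝ)/12000 ≤ m := by
      calc (n:ℝ)/12000 ≤ (Nat.ceil ((n:ℝ)/12000) : ℝ) := Nat.le_ceil _
      _ ≤ m := by exact_mod_cast le_max_right 1 (Nat.ceil ((n:ℝ)/12000))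
    linarith
  calc ∑' R, f R ≤ ∑' R, h R := hfh'
  _ = (1 - r)⁻¹ * r ^ m := htail
  _ ≤ 2 * L ^ (-((1/1000:ℝ)*n)/48) := mul_le_mul hinv hrm (pow_nonneg hr0 m) (by norm_num)
end

section
/- Let F be a uniformly expanding map with countable Markov partition {ω} of S¹ and return times R(ω), such that the F-invariant density is bounded above and below by positive constants, and K ≤ log‖F'|ω‖ ≤ K'·|log|ω|| for all ω. If there is 0 < γ < 1 with |log|ω|| ≤ |ω|^{−γ} for all ω, and Σ_ω |ω|^{1−γ} < ∞, then log|F'| is ν-integrable and ∫ log|F'| dν ≥ K > 0. -/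
open MeasureTheory

/-- Integrability of `log|F'|` for the induced Markov map (Corollary 4.6 setting):
if the invariant density is bounded between `c` and `C`, and on each partition element
`ω` one has `K ≤ log|F'| ≤ K'·|log|ω||` with `|log|ω|| ≤ |ω|^{−γ}` and
`Σ_ω |ω|^{1−γ} < ∞`, then `log|F'|` is `ν`-integrable with `∫ log|F'| dν ≥ K > 0`. -/
theorem stmt9 (ν : Measure UnitAddCircle) [IsProbabilityMeasure ν]
    (ρ : UnitAddCircle → ℝ) (c C : ℝ) (hc : 0 < c)
    (hν : ν = volume.withDensity (fun x => ENNReal.ofReal (ρ x)))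
    (hρ : ∀ x, c ≤ ρ x ∧ ρ x ≤ C)
    (ω : ℕ → Set UnitAddCircle) (hωmeas : ∀ n, MeasurableSet (ω n))
    (hωdisj : Pairwise (Function.onFun Disjoint ω))
    (hωfull : volume (⋃ n, ω n)ᶜ = 0)
    (g : UnitAddCircle → ℝ) (hg : Measurable g)
    (K K' γ : ℝ) (hK : 0 < K) (hγ0 : 0 < γ) (hγ1 : γ < 1)
    (hbound : ∀ n, ∀ x ∈ ω n,
      K ≤ g x ∧ g x ≤ K' * |Real.log (volume (ω n)).toReal|)
    (hlog : ∀ n, |Real.log (volume (ω n)).toReal| ≤ ((volume (ω n)).toReal) ^ (-γ))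
    (hsum : Summable (fun n => ((volume (ω n)).toReal) ^ (1 - γ))) :
    Integrable g ν ∧ K ≤ ∫ x, g x ∂ν ∧ 0 < ∫ x, g x ∂ν := by
  set t : ℕ → ℝ := fun n => (volume (ω n)).toReal with ht
  have ht0 : ∀ n, 0 ≤ t n := fun n => ENNReal.toReal_nonneg
  have hvolfin : ∀ n, volume (ω n) ≠ ⊤ := fun n => (measure_lt_top _ _).ne
  -- absolute continuity
  have hac : ν ≪ (volume : Measure UnitAddCircle) := by
    rw [hν]; exact withDensity_absolutelyContinuous _ _
  have hν_compl : ν (⋃ n, ω n)ᶜ = 0 := hac hωfull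
  have hae : ∀ᵐ x ∂ν, x ∈ ⋃ n, ω n := by
    rw [ae_iff]
    exact hν_compl
  -- some ω n is nonempty
  have hne : ∃ n, ∃ x, x ∈ ω n := by
    by_contra h
    push_neg at h
    have hU : (⋃ n, ω n) = ∅ := by
      ext x; simp [h]
    rw [hU, Set.compl_empty, AddCircle.measure_univ] at hωfull
    simp at hωfull
  obtain ⟨n₀, x₀, hx₀⟩ := hne
  have hK' : 0 < K' := by
    have h1 := (hbound n₀ x₀ hx₀).1
    have h2 := (hbound n₀ x₀ hx₀).2
    by_contra h
    push_neg at h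
    have : K' * |Real.log (t n₀)| ≤ 0 :=
      mul_nonpos_of_nonpos_of_nonneg h (abs_nonneg _)
    linarith
  have hC0 : 0 ≤ C := le_trans hc.le (le_trans (hρ x₀).1 (hρ x₀).2)
  -- bound on ν (ω n)
  have hνω : ∀ n, ν (ω n) ≤ ENNReal.ofReal C * volume (ω n) := by
    intro n
    rw [hν, withDensity_apply _ (hωmeas n)]
    calc ∫⁻ x in ω n, ENNReal.ofReal (ρ x) ∂volume
        ≤ ∫⁻ _x in ω n, ENNReal.ofReal C ∂volume :=
          lintegral_mono fun x => ENNReal.ofReal_le_ofReal (hρ x).2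
      _ = ENNReal.ofReal C * volume (ω n) := setLIntegral_const _ _
  -- the real bound per element
  have hreal : ∀ n, (K' * |Real.log (t n)|) * (C * t n) ≤ C * K' * t n ^ (1 - γ) := by
    intro n
    rcases eq_or_lt_of_le (ht0 n) with h0 | h0
    · rw [← h0]
      simp [Real.zero_rpow (by linarith : (1:ℝ) - γ ≠ 0)]
    · have h1 : |Real.log (t n)| ≤ t n ^ (-γ) := hlog n
      have h2 : t n ^ (-γ) * t n = t n ^ (1 - γ) := by
        rw [show (1:ℝ) - γ = -γ + 1 by ring, Real.rpow_add_one h0.ne']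
      have h3 : K' * |Real.log (t n)| * t n ≤ K' * (t n ^ (-γ)) * t n := by
        have := mul_le_mul_of_nonneg_left h1 hK'.le
        exact mul_le_mul_of_nonneg_right this (ht0 n)
      calc (K' * |Real.log (t n)|) * (C * t n)
          = C * (K' * |Real.log (t n)| * t n) := by ring
        _ ≤ C * (K' * (t n ^ (-γ)) * t n) := mul_le_mul_of_nonneg_left h3 hC0
        _ = C * K' * t n ^ (1 - γ) := by rw [mul_assoc K', h2]; ring
  -- per-element lintegral bound
  have hterm : ∀ n, ∫⁻ x in ω n, ‖g x‖₊ ∂ν ≤ ENNReal.ofReal (C * K' * t n ^ (1 - γ)) := by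
    intro n
    have hMnn : 0 ≤ K' * |Real.log (t n)| := mul_nonneg hK'.le (abs_nonneg _)
    calc ∫⁻ x in ω n, ‖g x‖₊ ∂ν
        ≤ ∫⁻ _x in ω n, ENNReal.ofReal (K' * |Real.log (t n)|) ∂ν := by
          apply setLIntegral_mono (by measurability) ?_
          intro x hx
          have hb := hbound n x hx
          have hgpos : 0 ≤ g x := le_trans hK.le hb.1
          rw [← enorm_eq_nnnorm, Real.enorm_eq_ofReal hgpos]
          exact ENNReal.ofReal_le_ofReal hb.2
      _ = ENNReal.ofReal (K' * |Real.log (t n)|) * ν (ω n) := setLIntegral_const _ _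
      _ ≤ ENNReal.ofReal (K' * |Real.log (t n)|) * (ENNReal.ofReal C * volume (ω n)) :=
          mul_le_mul_right (hνω n) _
      _ = ENNReal.ofReal ((K' * |Real.log (t n)|) * (C * t n)) := by
          rw [← ENNReal.ofReal_toReal (hvolfin n), ← ENNReal.ofReal_mul hC0,
            ← ENNReal.ofReal_mul hMnn]
      _ ≤ ENNReal.ofReal (C * K' * t n ^ (1 - γ)) :=
          ENNReal.ofReal_le_ofReal (hreal n)
  -- finiteness of the total integral
  have hUmeas : MeasurableSet (⋃ n, ω n) := MeasurableSet.iUnion hωmeas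
  have hfin : ∫⁻ x, ‖g x‖₊ ∂ν < ⊤ := by
    have hsplit : ∫⁻ x, ‖g x‖₊ ∂ν = ∫⁻ x in ⋃ n, ω n, ‖g x‖₊ ∂ν := by
      rw [← lintegral_add_compl (fun x => (‖g x‖₊ : ENNReal)) hUmeas,
        setLIntegral_measure_zero _ _ hν_compl, add_zero]
    rw [hsplit, lintegral_iUnion hωmeas hωdisj]
    calc (∑' n, ∫⁻ x in ω n, ‖g x‖₊ ∂ν)
        ≤ ∑' n, ENNReal.ofReal (C * K' * t n ^ (1 - γ)) := ENNReal.tsum_le_tsum hterm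
      _ = ENNReal.ofReal (∑' n, C * K' * t n ^ (1 - γ)) := by
          rw [ENNReal.ofReal_tsum_of_nonneg
            (fun n => mul_nonneg (mul_nonneg hC0 hK'.le) (Real.rpow_nonneg (ht0 n) _))
            (hsum.mul_left (C * K'))]
      _ < ⊤ := ENNReal.ofReal_lt_top
  have hint : Integrable g ν := ⟨hg.aestronglyMeasurable, hfin⟩
  refine ⟨hint, ?_, ?_⟩
  · have haeK : ∀ᵐ x ∂ν, K ≤ g x := by
      filter_upwards [hae] with x hx
      obtain ⟨n, hn⟩ := Set.mem_iUnion.mp hx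
      exact (hbound n x hn).1
    calc K = ∫ _x, K ∂ν := by simp
      _ ≤ ∫ x, g x ∂ν := integral_mono_ae (integrable_const K) hint haeK
  · have haeK : ∀ᵐ x ∂ν, K ≤ g x := by
      filter_upwards [hae] with x hx
      obtain ⟨n, hn⟩ := Set.mem_iUnion.mp hx
      exact (hbound n x hn).1
    have : K ≤ ∫ x, g x ∂ν := by
      calc K = ∫ _x, K ∂ν := by simp
        _ ≤ ∫ x, g x ∂ν := integral_mono_ae (integrable_const K) hint haeK
    linarith
end
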